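/- Let a, b ∈ V with a ≠ b. Then the following are equivalent: (i) there exists c ∈ V such that ϑ_b(u) = ϑ_a(u + ⟨u,c⟩·c) for all u ∈ V (i.e., ϑ_a is carried to ϑ_b by the symplectic transvection T_c); (ii) there exists γ ∈ F, γ ≠ 0, such that ϑ_b(u) = ϑ_a(u + γ²·⟨u, a+b⟩·(a+b)) for all u ∈ V; (iii) there exists t ∈ F with t² + t + ϑ_0(a) + ϑ_0(b) = 0; (iv) Tr(ϑ_0(a)) = Tr(ϑ_0(b)). -/

import Mathlib

open Finset

noncomputable section

/-- The symplectic bilinear form `⟨u,v⟩ = ∑_{i<m} (u_i v_{m+i} + u_{m+i} v_i)` on `F^{2m}`,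
`F = GF(2^h)`. -/
def symp (h m : ℕ) (u v : Fin (2*m) → GaloisField 2 h) : GaloisField 2 h :=
  ∑ i : Fin m, (u ⟨i.1, by omega⟩ * v ⟨m + i.1, by omega⟩ +
    u ⟨m + i.1, by omega⟩ * v ⟨i.1, by omega⟩)

/-- The quadratic form `ϑ_0(u) = ∑_{i<m} u_i u_{m+i}`. -/
def th0 (h m : ℕ) (u : Fin (2*m) → GaloisField 2 h) : GaloisField 2 h :=
  ∑ i : Fin m, u ⟨i.1, by omega⟩ * u ⟨m + i.1, by omega⟩

/-- The quadratic form `ϑ_a(u) = ϑ_0(u) + ⟨a,u⟩²`. -/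
def th (h m : ℕ) (a u : Fin (2*m) → GaloisField 2 h) : GaloisField 2 h :=
  th0 h m u + (symp h m a u)^2

/-- The absolute trace `GF(2^h) → F_2`. -/
def tr (h : ℕ) (x : GaloisField 2 h) : ZMod 2 :=
  Algebra.trace (ZMod 2) (GaloisField 2 h) x

end

section Stmt17Aux

variable (h m : ℕ)

lemma addK {K : Type*} [Ring K] [CharP K 2] (x y : K) : x + y = 0 ↔ x = y := by
  constructor
  · intro hx
    rw [← CharTwo.neg_eq y]
    exact eq_neg_of_add_eq_zero_left hx
  · rintro rfl; exact CharTwo.add_self_eq_zero x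



lemma tr_sq (x : GaloisField 2 h) : tr h (x^2) = tr h x := by
  let e : GaloisField 2 h ≃ₐ[ZMod 2] GaloisField 2 h :=
    { frobeniusEquiv (GaloisField 2 h) 2 with
      commutes' := fun r => by
        rw [RingEquiv.toEquiv_eq_coe]
        show frobeniusEquiv (GaloisField 2 h) 2 _ = _
        rw [frobeniusEquiv_def, ← map_pow, ZMod.pow_card] }
  have := Algebra.trace_eq_of_algEquiv e x
  simpa [tr, e, frobeniusEquiv_def, frobenius_def] using this

lemma artin_schreier (D : GaloisField 2 h) :
    (∃ t, t^2 + t + D = 0) ↔ tr h D = 0 := by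
  have hts : ∀ t : GaloisField 2 h, tr h (t^2 + t) = 0 := fun t => by
    rw [show tr h (t^2+t) = tr h (t^2) + tr h t from map_add _ _ _, tr_sq,
      CharTwo.add_self_eq_zero]
  constructor
  · rintro ⟨t, ht⟩
    rw [← ((addK _ _).mp ht : t^2 + t = D)]
    exact hts t
  · intro hD
    let φ : GaloisField 2 h →+ GaloisField 2 h :=
      { toFun := fun t => t^2 + t
        map_zero' := by ring
        map_add' := fun s t => by
          show (s+t)^2 + (s+t) = (s^2+s) + (t^2+t)
          rw [CharTwo.add_sq]; ring }
    let ψ : GaloisField 2 h →+ ZMod 2 := (Algebra.trace (ZMod 2) (GaloisField 2 h)).toAddMonoidHom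
    have hψsurj : Function.Surjective ψ := Algebra.trace_surjective _ _
    have hkerφ : (φ.ker : Set (GaloisField 2 h)) = {0, 1} := by
      ext t
      simp only [SetLike.mem_coe, AddMonoidHom.mem_ker, Set.mem_insert_iff,
        Set.mem_singleton_iff]
      show t^2 + t = 0 ↔ _
      constructor
      · intro ht
        have h1 : t * (t + 1) = 0 := by rw [← ht]; ring
        rcases mul_eq_zero.mp h1 with h1 | h1
        · exact Or.inl h1
        · exact Or.inr ((addK t 1).mp h1)
      · rintro (rfl | rfl)
        · ring
        · rw [one_pow]; exact CharTwo.add_self_eq_zero 1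
    have hcard1 : Nat.card (GaloisField 2 h) = Nat.card φ.range * 2 := by
      have h1 := AddSubgroup.card_eq_card_quotient_mul_card_addSubgroup φ.ker
      have h2 : Nat.card (GaloisField 2 h ⧸ φ.ker) = Nat.card φ.range :=
        Nat.card_congr (QuotientAddGroup.quotientKerEquivRange φ).toEquiv
      have h3 : Nat.card φ.ker = 2 :=
        (Nat.card_congr (Equiv.setCongr hkerφ)).trans
          (by rw [Nat.card_coe_set_eq, Set.ncard_pair (zero_ne_one)])
      rw [h1, h2, h3]
    have hcard2 : Nat.card (GaloisField 2 h) = 2 * Nat.card ψ.ker := by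
      have h1 := AddSubgroup.card_eq_card_quotient_mul_card_addSubgroup ψ.ker
      have h2 : Nat.card (GaloisField 2 h ⧸ ψ.ker) = Nat.card ψ.range :=
        Nat.card_congr (QuotientAddGroup.quotientKerEquivRange ψ).toEquiv
      have h3 : ψ.range = ⊤ := AddMonoidHom.range_eq_top.mpr hψsurj
      rw [h1, h2, h3, AddSubgroup.card_top, Nat.card_zmod]
    have hle : φ.range ≤ ψ.ker := by
      rintro x ⟨t, rfl⟩
      exact hts t
    have heq : φ.range = ψ.ker :=
      AddSubgroup.eq_of_le_of_card_ge hle (by omega)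
    have : D ∈ φ.range := heq ▸ hD
    obtain ⟨t, ht⟩ := this
    exact ⟨t, by rw [show φ t = t^2 + t from rfl] at ht; rw [ht]; exact CharTwo.add_self_eq_zero D⟩


lemma symp_comm (u v : Fin (2*m) → GaloisField 2 h) : symp h m u v = symp h m v u := by
  unfold symp; exact Finset.sum_congr rfl fun i _ => by ring

lemma symp_self (u : Fin (2*m) → GaloisField 2 h) : symp h m u u = 0 := by
  unfold symp
  rw [Finset.sum_eq_zero]
  intro i _
  rw [mul_comm]
  exact CharTwo.add_self_eq_zero _

lemma symp_add_right (u v w : Fin (2*m) → GaloisField 2 h) :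
    symp h m u (v + w) = symp h m u v + symp h m u w := by
  unfold symp; rw [← Finset.sum_add_distrib]
  exact Finset.sum_congr rfl fun i _ => by simp only [Pi.add_apply]; ring

lemma symp_smul_right (k : GaloisField 2 h) (u v : Fin (2*m) → GaloisField 2 h) :
    symp h m u (k • v) = k * symp h m u v := by
  unfold symp; rw [Finset.mul_sum]
  exact Finset.sum_congr rfl fun i _ => by simp only [Pi.smul_apply, smul_eq_mul]; ring

lemma th0_add (u v : Fin (2*m) → GaloisField 2 h) :
    th0 h m (u + v) = th0 h m u + th0 h m v + symp h m u v := by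
  unfold th0 symp
  rw [← Finset.sum_add_distrib, ← Finset.sum_add_distrib]
  exact Finset.sum_congr rfl fun i _ => by simp only [Pi.add_apply]; ring

lemma th0_smul (k : GaloisField 2 h) (u : Fin (2*m) → GaloisField 2 h) :
    th0 h m (k • u) = k^2 * th0 h m u := by
  unfold th0; rw [Finset.mul_sum]
  exact Finset.sum_congr rfl fun i _ => by simp only [Pi.smul_apply, smul_eq_mul]; ring

lemma symp_single_fst (i₀ : Fin m) (c : Fin (2*m) → GaloisField 2 h) :
    symp h m (Pi.single ⟨i₀.1, by omega⟩ 1) c = c ⟨m + i₀.1, by omega⟩ := by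
  unfold symp
  rw [Finset.sum_eq_single i₀]
  · have hlt := i₀.2
    rw [Pi.single_eq_same, Pi.single_eq_of_ne (by simp only [ne_eq, Fin.mk.injEq]; omega),
      one_mul, zero_mul, add_zero]
  · intro i _ hne
    have hlt := i₀.2
    have hv : i.1 ≠ i₀.1 := fun hv => hne (Fin.ext hv)
    rw [Pi.single_eq_of_ne (by simp only [ne_eq, Fin.mk.injEq]; omega),
      Pi.single_eq_of_ne (by simp only [ne_eq, Fin.mk.injEq]; omega), zero_mul, zero_mul, add_zero]
  · simp
lemma symp_single_snd (i₀ : Fin m) (c : Fin (2*m) → GaloisField 2 h) :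
    symp h m (Pi.single ⟨m + i₀.1, by omega⟩ 1) c = c ⟨i₀.1, by omega⟩ := by
  unfold symp
  rw [Finset.sum_eq_single i₀]
  · have hlt := i₀.2
    rw [Pi.single_eq_same, Pi.single_eq_of_ne (by simp only [ne_eq, Fin.mk.injEq]; omega),
      one_mul, zero_mul, zero_add]
  · intro i _ hne
    have hlt := i₀.2
    have hv : i.1 ≠ i₀.1 := fun hv => hne (Fin.ext hv)
    rw [Pi.single_eq_of_ne (by simp only [ne_eq, Fin.mk.injEq]; omega),
      Pi.single_eq_of_ne (by simp only [ne_eq, Fin.mk.injEq]; omega), zero_mul, zero_mul, add_zero]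
  · simp

lemma symp_nondeg (c : Fin (2*m) → GaloisField 2 h) (hc : ∀ u, symp h m u c = 0) : c = 0 := by
  funext j
  show c j = 0
  by_cases hj : j.1 < m
  · have := hc (Pi.single ⟨m + (⟨j.1, hj⟩ : Fin m).1, by omega⟩ 1)
    rw [symp_single_snd] at this
    exact this
  · have hj2 : j.1 - m < m := by omega
    have := hc (Pi.single ⟨(⟨j.1 - m, hj2⟩ : Fin m).1, by omega⟩ 1)
    rw [symp_single_fst] at this
    have hj3 : j = ⟨m + (⟨j.1 - m, hj2⟩:Fin m).1, by omega⟩ := Fin.ext (by simp; omega)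
    rw [hj3]
    exact this

lemma symp_add_left (u v w : Fin (2*m) → GaloisField 2 h) :
    symp h m (u + v) w = symp h m u w + symp h m v w := by
  rw [symp_comm, symp_add_right, symp_comm h m w u, symp_comm h m w v]

lemma symp_smul_left (k : GaloisField 2 h) (u v : Fin (2*m) → GaloisField 2 h) :
    symp h m (k • u) v = k * symp h m u v := by
  rw [symp_comm, symp_smul_right, symp_comm]

lemma symp_surj (d : Fin (2*m) → GaloisField 2 h) (hd : d ≠ 0) (x : GaloisField 2 h) :
    ∃ u, symp h m u d = x := by
  have : ¬ (∀ u, symp h m u d = 0) := fun hc => hd (symp_nondeg h m d hc)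
  push_neg at this
  obtain ⟨u₀, hu₀⟩ := this
  refine ⟨(x * (symp h m u₀ d)⁻¹) • u₀, ?_⟩
  rw [symp_smul_left, mul_assoc, inv_mul_cancel₀ hu₀, mul_one]

lemma sq_inj (x y : GaloisField 2 h) (hxy : x^2 = y^2) : x = y :=
  injective_frobenius (GaloisField 2 h) 2 (by simpa [frobenius_def] using hxy)

lemma sq_surj (x : GaloisField 2 h) : ∃ y, y^2 = x := by
  obtain ⟨y, hy⟩ := surjective_frobenius (GaloisField 2 h) 2 x
  exact ⟨y, hy⟩

-- the key expansion
lemma key (a c u : Fin (2*m) → GaloisField 2 h) :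
    th h m a (u + symp h m u c • c) =
      th0 h m u + (symp h m a u)^2
        + (symp h m u c)^2 * (th0 h m c + 1 + (symp h m a c)^2) := by
  have h2 : (2 : GaloisField 2 h) = 0 := CharTwo.two_eq_zero
  unfold th
  rw [th0_add, th0_smul, symp_add_right, symp_smul_right, symp_smul_right,
    symp_comm h m u c, CharTwo.add_sq]
  ring

-- condition equivalence
lemma condB (a b c : Fin (2*m) → GaloisField 2 h) :
    (∀ u, th h m b u = th h m a (u + symp h m u c • c)) ↔
    (∀ u, (symp h m u (a+b))^2
      = (symp h m u c)^2 * (th0 h m c + 1 + (symp h m a c)^2)) := by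
  have h2 : (2 : GaloisField 2 h) = 0 := CharTwo.two_eq_zero
  constructor
  · intro H u
    have e := H u
    rw [key] at e
    unfold th at e
    rw [symp_add_right, symp_comm h m u a, symp_comm h m u b, CharTwo.add_sq]
    linear_combination e + (symp h m a u)^2 * h2
  · intro H u
    have e := H u
    rw [key]
    unfold th
    rw [symp_add_right, symp_comm h m u a, symp_comm h m u b, CharTwo.add_sq] at e
    linear_combination e - (symp h m a u)^2 * h2


lemma add_ne (a b : Fin (2*m) → GaloisField 2 h) (hab : a ≠ b) : a + b ≠ 0 := by
  intro hc
  apply hab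
  funext j
  have : a j + b j = 0 := congrFun hc j
  exact (addK _ _).mp this

lemma targ (γ : GaloisField 2 h) (v u : Fin (2*m) → GaloisField 2 h) :
    u + (γ^2 * symp h m u v) • v = u + symp h m u (γ • v) • (γ • v) := by
  funext j
  simp only [Pi.add_apply, Pi.smul_apply, smul_eq_mul, symp_smul_right]
  ring

-- the scalar condition E
lemma condE (a b : Fin (2*m) → GaloisField 2 h) (hab : a ≠ b) (γ : GaloisField 2 h) :
    (∀ u, th h m b u = th h m a (u + (γ^2 * symp h m u (a + b)) • (a + b))) ↔
    γ^2 * (γ^2 * (th0 h m a + th0 h m b + symp h m a b) + 1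
      + γ^2 * (symp h m a b)^2) = 1 := by
  have h2 : (2 : GaloisField 2 h) = 0 := CharTwo.two_eq_zero
  have hsa : symp h m a (a + b) = symp h m a b := by
    rw [symp_add_right, symp_self, zero_add]
  have hth0 : th0 h m (a + b) = th0 h m a + th0 h m b + symp h m a b := th0_add h m a b
  constructor
  · intro H
    obtain ⟨u₀, hu₀⟩ := symp_surj h m (a+b) (add_ne h m a b hab) 1
    have hc := (condB h m a b (γ • (a+b))).mp (fun u => by rw [← targ]; exact H u) u₀
    rw [hu₀, symp_smul_right, hu₀, th0_smul, symp_smul_right, hsa, hth0] at hc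
    linear_combination -hc
  · intro E u
    rw [targ]
    refine (condB h m a b (γ • (a+b))).mpr (fun u => ?_) u
    rw [symp_smul_right, th0_smul, symp_smul_right, hsa, hth0]
    linear_combination (symp h m u (a+b))^2 * E
      + (symp h m u (a+b))^2 * (1 - γ^2 - γ^4*(th0 h m a + th0 h m b + symp h m a b)
        - γ^4*(symp h m a b)^2) * h2

lemma iff23 (a b : Fin (2*m) → GaloisField 2 h) (hab : a ≠ b) :
    (∃ γ : GaloisField 2 h, γ ≠ 0 ∧
        ∀ u, th h m b u = th h m a (u + (γ^2 * symp h m u (a + b)) • (a + b)))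
      ↔ (∃ t : GaloisField 2 h, t^2 + t + th0 h m a + th0 h m b = 0) := by
  have h2 : (2 : GaloisField 2 h) = 0 := CharTwo.two_eq_zero
  set D := th0 h m a + th0 h m b with hD
  set σ := symp h m a b with hσ
  constructor
  · rintro ⟨γ, hγ, H⟩
    have E := (condE h m a b hab γ).mp H
    refine ⟨(γ⁻¹)^2 + σ, ?_⟩
    have hw : γ * γ⁻¹ = 1 := mul_inv_cancel₀ hγ
    have hw2 : γ^2 * (γ⁻¹)^2 = 1 := by rw [← mul_pow, hw, one_pow]
    have hw4 : γ^4 * (γ⁻¹)^4 = 1 := by rw [← mul_pow, hw, one_pow]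
    apply mul_left_cancel₀ (pow_ne_zero 4 hγ)
    linear_combination hw4 + γ^2*hw2 + 2*σ*γ^2*hw2 + σ*γ^2*h2 + E + h2
  · rintro ⟨t, ht⟩
    have hDt : t^2 + t + D = 0 := by rw [hD]; linear_combination ht
    -- choose root t' with t' + σ ≠ 0
    obtain ⟨t', ht', hne⟩ : ∃ t', t'^2 + t' + D = 0 ∧ t' + σ ≠ 0 := by
      by_cases hts : t + σ ≠ 0
      · exact ⟨t, hDt, hts⟩
      · push_neg at hts
        refine ⟨t + 1, by linear_combination hDt + t * h2 + h2, ?_⟩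
        rw [add_comm t 1, add_assoc, hts]
        norm_num
    obtain ⟨γ, hγ2⟩ := sq_surj h ((t' + σ)⁻¹)
    have hγ : γ ≠ 0 := by
      intro hc
      rw [hc] at hγ2
      exact inv_ne_zero hne (by linear_combination -hγ2)
    refine ⟨γ, hγ, (condE h m a b hab γ).mpr ?_⟩
    have hw : (t' + σ) * (t' + σ)⁻¹ = 1 := mul_inv_cancel₀ hne
    rw [hγ2]
    apply mul_left_cancel₀ (pow_ne_zero 2 hne)
    linear_combination ((D + σ + σ^2)*((t'+σ)*(t'+σ)⁻¹+1) + (t'+σ))*hw - ht'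
      + (t'+D+σ-t'*σ)*h2

lemma iff12 (a b : Fin (2*m) → GaloisField 2 h) (hab : a ≠ b) :
    (∃ c : Fin (2*m) → GaloisField 2 h,
        ∀ u, th h m b u = th h m a (u + symp h m u c • c))
      ↔ (∃ γ : GaloisField 2 h, γ ≠ 0 ∧
        ∀ u, th h m b u = th h m a (u + (γ^2 * symp h m u (a + b)) • (a + b))) := by
  constructor
  · rintro ⟨c, H⟩
    have hc := (condB h m a b c).mp H
    obtain ⟨l, hl⟩ := sq_surj h (th0 h m c + 1 + (symp h m a c)^2)
    have hsympeq : ∀ u, symp h m u (a + b) = symp h m u (l • c) := by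
      intro u
      apply sq_inj
      rw [symp_smul_right, mul_pow, hc u, hl]
      ring
    have hlc : l • c = a + b := by
      have hz : ∀ u, symp h m u ((a + b) + l • c) = 0 := by
        intro u
        rw [symp_add_right, ← hsympeq u, CharTwo.add_self_eq_zero]
      have h0 := symp_nondeg h m _ (fun u => hz u)
      funext j
      have : (a + b) j + (l • c) j = 0 := congrFun h0 j
      exact ((addK _ _).mp this).symm
    have hl0 : l ≠ 0 := by
      intro hc0
      apply add_ne h m a b hab
      rw [← hlc, hc0, zero_smul]
    refine ⟨l⁻¹, inv_ne_zero hl0, fun u => ?_⟩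
    have hwl : l * l⁻¹ = 1 := mul_inv_cancel₀ hl0
    have harg : u + ((l⁻¹)^2 * symp h m u (a + b)) • (a + b) = u + symp h m u c • c := by
      funext j
      rw [← hlc]
      simp only [Pi.add_apply, Pi.smul_apply, smul_eq_mul, symp_smul_right]
      field_simp
    rw [harg]
    exact H u
  · rintro ⟨γ, hγ, H⟩
    exact ⟨γ • (a + b), fun u => by rw [← targ]; exact H u⟩

lemma iff34 (a b : Fin (2*m) → GaloisField 2 h) :
    (∃ t : GaloisField 2 h, t^2 + t + th0 h m a + th0 h m b = 0)
      ↔ tr h (th0 h m a) = tr h (th0 h m b) := by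
  have h1 : (∃ t : GaloisField 2 h, t^2 + t + th0 h m a + th0 h m b = 0)
      ↔ (∃ t : GaloisField 2 h, t^2 + t + (th0 h m a + th0 h m b) = 0) :=
    exists_congr (fun t => by constructor <;> intro ht <;> linear_combination ht)
  rw [h1, artin_schreier h (th0 h m a + th0 h m b),
    show tr h (th0 h m a + th0 h m b) = tr h (th0 h m a) + tr h (th0 h m b) from map_add _ _ _]
  exact addK _ _

/-- For `a ≠ b` the following are equivalent: (i) some symplectic transvection `T_c`
carries `ϑ_a` to `ϑ_b`; (ii) some transvection `T_{γ(a+b)}` with `γ ≠ 0` does;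
(iii) `t² + t + ϑ_0(a) + ϑ_0(b)` has a root in `F`; (iv) `Tr(ϑ_0(a)) = Tr(ϑ_0(b))`. -/
theorem stmt_17 (h m : ℕ) (hh : 1 ≤ h) (hm : 1 ≤ m)
    (a b : Fin (2*m) → GaloisField 2 h) (hab : a ≠ b) :
    ((∃ c : Fin (2*m) → GaloisField 2 h,
        ∀ u, th h m b u = th h m a (u + symp h m u c • c))
      ↔ (∃ γ : GaloisField 2 h, γ ≠ 0 ∧
        ∀ u, th h m b u = th h m a (u + (γ^2 * symp h m u (a + b)) • (a + b))))
    ∧ ((∃ γ : GaloisField 2 h, γ ≠ 0 ∧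
        ∀ u, th h m b u = th h m a (u + (γ^2 * symp h m u (a + b)) • (a + b)))
      ↔ (∃ t : GaloisField 2 h, t^2 + t + th0 h m a + th0 h m b = 0))
    ∧ ((∃ t : GaloisField 2 h, t^2 + t + th0 h m a + th0 h m b = 0)
      ↔ tr h (th0 h m a) = tr h (th0 h m b)) := by
  exact ⟨iff12 h m a b hab, iff23 h m a b hab, iff34 h m a b⟩

end Stmt17Aux
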